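/- A stable set S is a maximum stable set of G if and only if every stable set A of G disjoint from S can be matched into S (i.e., there is a matching saturating A whose edges all go from A to S). -/
import Mathlib


open Finset

variable {V : Type*} [Fintype V] [DecidableEq V]

/-  A set of vertices is stable (independent) if no two of its vertices are adjacent. -/
def stable (G : SimpleGraph V) (S : Finset V) : Prop :=
  ∀ a ∈ S, ∀ b ∈ S, ¬ G.Adj a b

/-  The (open) neighborhood of a set of vertices. -/
open Classical in
noncomputable def nbhd (G : SimpleGraph V) (A : Finset V) : Finset V :=
  Finset.univ.filter fun v => ∃ a ∈ A, G.Adj a v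

/-  The stability number: maximum size of a stable set. -/
open Classical in
noncomputable def alpha (G : SimpleGraph V) : ℕ :=
  Finset.univ.sup fun S : Finset V => if stable G S then S.card else 0

/-  A maximum stable set. -/
def maxStable (G : SimpleGraph V) (S : Finset V) : Prop :=
  stable G S ∧ S.card = alpha G

/-  core(G): the intersection of all maximum stable sets. -/
open Classical in
noncomputable def core (G : SimpleGraph V) : Finset V :=
  Finset.univ.filter fun v => ∀ S : Finset V, maxStable G S → v ∈ S

/-  A vertex is isolated if it has no neighbors. -/
def isolated (G : SimpleGraph V) (v : V) : Prop := ∀ w, ¬ G.Adj v w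

/-  The set of isolated vertices. -/
open Classical in
noncomputable def isol (G : SimpleGraph V) : Finset V :=
  Finset.univ.filter fun v => isolated G v

/-  Berge: a stable set S is maximum iff every stable set A disjoint from S can be
matched into S. -/
open Classical in
lemma card_le_alpha' (G : SimpleGraph V) {T : Finset V} (hT : stable G T) :
    T.card ≤ alpha G := by
  have h := Finset.le_sup (f := fun S : Finset V => if stable G S then S.card else 0)
    (Finset.mem_univ T)
  simpa [alpha, hT] using h

theorem stmt2 (G : SimpleGraph V) (S : Finset V) (hS : stable G S) :
    maxStable G S ↔
      ∀ A : Finset V, stable G A → Disjoint A S →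
        ∃ f : {a : V // a ∈ A} → V, Function.Injective f ∧
          ∀ a : {a : V // a ∈ A}, f a ∈ S ∧ G.Adj a.1 (f a) := by
  classical
  constructor
  · rintro ⟨-, hScard⟩ A hA hdisj
    have hall : ∀ B : Finset {a : V // a ∈ A},
        B.card ≤ (B.biUnion fun a => S.filter fun v => G.Adj a.1 v).card := by
      intro B
      set U := B.biUnion fun a => S.filter fun v => G.Adj a.1 v with hU
      have hUS : U ⊆ S := by
        intro v hv
        simp only [hU, Finset.mem_biUnion, Finset.mem_filter] at hv
        obtain ⟨a, -, hv, -⟩ := hv; exact hv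
      set B' := B.image (fun a => a.1) with hB'
      have hB'card : B'.card = B.card := Finset.card_image_of_injective _ Subtype.val_injective
      have hB'A : B' ⊆ A := by
        intro v hv
        simp only [hB', Finset.mem_image] at hv
        obtain ⟨b, -, rfl⟩ := hv; exact b.2
      have hdisj' : Disjoint B' (S \ U) :=
        Finset.disjoint_of_subset_right (Finset.sdiff_subset) (hdisj.mono_left hB'A)
      have hTstable : stable G ((S \ U) ∪ B') := by
        intro x hx y hy hxy
        rcases Finset.mem_union.1 hx with hx | hx <;> rcases Finset.mem_union.1 hy with hy | hy
        · exact hS x (Finset.mem_sdiff.1 hx).1 y (Finset.mem_sdiff.1 hy).1 hxy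
        · -- x ∈ S \ U, y ∈ B'
          obtain ⟨b, hb, rfl⟩ := Finset.mem_image.1 hy
          have : x ∈ U := by
            simp only [hU, Finset.mem_biUnion, Finset.mem_filter]
            exact ⟨b, hb, (Finset.mem_sdiff.1 hx).1, hxy.symm⟩
          exact (Finset.mem_sdiff.1 hx).2 this
        · obtain ⟨b, hb, rfl⟩ := Finset.mem_image.1 hx
          have : y ∈ U := by
            simp only [hU, Finset.mem_biUnion, Finset.mem_filter]
            exact ⟨b, hb, (Finset.mem_sdiff.1 hy).1, hxy⟩
          exact (Finset.mem_sdiff.1 hy).2 this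
        · exact hA x (hB'A hx) y (hB'A hy) hxy
      have hcard := card_le_alpha' G hTstable
      rw [← hScard] at hcard
      rw [Finset.card_union_of_disjoint hdisj'.symm, Finset.card_sdiff_of_subset hUS] at hcard
      have h1 : U.card ≤ S.card := Finset.card_le_card hUS
      omega
    obtain ⟨f, hfinj, hfm⟩ :=
      (Finset.all_card_le_biUnion_card_iff_existsInjective'
        (fun a : {a : V // a ∈ A} => S.filter fun v => G.Adj a.1 v)).1 hall
    refine ⟨f, hfinj, fun a => ?_⟩
    have := hfm a
    simp only [Finset.mem_filter] at this
    exact this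
  · intro h
    refine ⟨hS, le_antisymm (card_le_alpha' G hS) ?_⟩
    obtain ⟨T, -, hT⟩ := Finset.exists_mem_eq_sup Finset.univ Finset.univ_nonempty
      (fun S : Finset V => if stable G S then S.card else 0)
    by_cases hstT : stable G T
    · have hTcard : T.card = alpha G := by rw [alpha, hT, if_pos hstT]
      obtain ⟨f, hfinj, hfm⟩ := h (T \ S) (fun a ha b hb => hstT a (Finset.mem_sdiff.1 ha).1 b
        (Finset.mem_sdiff.1 hb).1) Finset.sdiff_disjoint
      have hfST : ∀ a : {a : V // a ∈ T \ S}, f a ∈ S \ T := by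
        intro a
        rcases hfm a with ⟨h1, h2⟩
        refine Finset.mem_sdiff.2 ⟨h1, fun hfa => ?_⟩
        exact hstT a.1 (Finset.mem_sdiff.1 a.2).1 (f a) hfa h2
      have hle : (T \ S).card ≤ (S \ T).card := by
        have : Fintype.card {a : V // a ∈ T \ S} ≤ Fintype.card {v : V // v ∈ S \ T} :=
          Fintype.card_le_of_injective (fun a => ⟨f a, hfST a⟩)
            (fun a b hab => hfinj (by simpa using congrArg Subtype.val hab))
        rwa [Fintype.card_coe, Fintype.card_coe] at this
      have h1 : (T ∩ S).card + (T \ S).card = T.card := Finset.card_inter_add_card_sdiff T S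
      have h2 : (S ∩ T).card + (S \ T).card = S.card := Finset.card_inter_add_card_sdiff S T
      rw [Finset.inter_comm] at h2
      omega
    · have : alpha G = 0 := by rw [alpha, hT, if_neg hstT]
      omega
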